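/- For every z = x₀ + i·y₀ with a < x₀ < b and g(x₀) < y₀ < 0 (i.e. z in the interior of the region D between [a,b] and Γ) one has ∫_a^b (1 + i·g'(x)) (z − x − i·g(x))⁻¹ · K(x + i·g(x)) dx = ∫_a^b (z − x)⁻¹ · K(x) dx − 2πi · K(z); that is, the analytic continuation of the transfer integral through the interval [a,b] into the lower half-plane differs from the original integral by the residue term −2πi·K(z). -/

import Mathlib

open MeasureTheory Set Complex intervalIntegral Metric Filter Topology

noncomputable section

variable {H : Type*} [NormedAddCommGroup H] [InnerProductSpace ℂ H] [CompleteSpace H]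


lemma homotopy_invariance {E : Type*} [NormedAddCommGroup E] [NormedSpace ℂ E]
    [CompleteSpace E]
    (F : ℂ → E) (V : Set ℂ) (hV : IsOpen V) (hF : ∀ w ∈ V, DifferentiableAt ℂ F w)
    (a b : ℝ) (hab : a ≤ b) (h₀ h₁ : ℝ → ℝ)
    (hh₀ : ContDiff ℝ 1 h₀) (hh₁ : ContDiff ℝ 1 h₁)
    (hea : h₀ a = h₁ a) (heb : h₀ b = h₁ b)
    (hmem : ∀ s ∈ Set.Icc (0:ℝ) 1, ∀ x ∈ Set.Icc a b,
      (x : ℂ) + Complex.I * Complex.ofReal (h₀ x + s * (h₁ x - h₀ x)) ∈ V) :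
    (∫ x in a..b, (1 + Complex.I * Complex.ofReal (deriv h₀ x)) • F (x + Complex.I * Complex.ofReal (h₀ x)))
      = ∫ x in a..b, (1 + Complex.I * Complex.ofReal (deriv h₁ x)) • F (x + Complex.I * Complex.ofReal (h₁ x)) := by
  -- basic differentiability facts
  have hdh₀ : Differentiable ℝ h₀ := hh₀.differentiable one_ne_zero
  have hdh₁ : Differentiable ℝ h₁ := hh₁.differentiable one_ne_zero
  have hch₀' : Continuous (deriv h₀) := hh₀.continuous_deriv le_rfl
  have hch₁' : Continuous (deriv h₁) := hh₁.continuous_deriv le_rfl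
  set d : ℝ → ℝ := fun x => h₁ x - h₀ x with hd_def
  set d' : ℝ → ℝ := fun x => deriv h₁ x - deriv h₀ x with hd'_def
  have hd : ∀ x, HasDerivAt d (d' x) x := fun x =>
    (hdh₁ x).hasDerivAt.sub (hdh₀ x).hasDerivAt
  have hcd : Continuous d := (hh₁.continuous).sub (hh₀.continuous)
  have hcd' : Continuous d' := hch₁'.sub hch₀'
  set γ : ℝ → ℝ → ℂ := fun s x => (x:ℂ) + Complex.I * (h₀ x : ℂ) + (s:ℂ) * (Complex.I * (d x : ℂ))
    with hγ_def
  set c : ℝ → ℝ → ℂ :=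
    fun s x => 1 + Complex.I * Complex.ofReal (deriv h₀ x) + (s:ℂ) * (Complex.I * Complex.ofReal (d' x)) with hc_def
  have hγcont : Continuous (fun p : ℝ × ℝ => γ p.1 p.2) := by
    apply Continuous.add
    apply Continuous.add
    · exact Complex.continuous_ofReal.comp continuous_snd
    · exact continuous_const.mul (Complex.continuous_ofReal.comp (hh₀.continuous.comp continuous_snd))
    · exact (Complex.continuous_ofReal.comp continuous_fst).mul
        (continuous_const.mul (Complex.continuous_ofReal.comp (hcd.comp continuous_snd)))
  have hccont : Continuous (fun p : ℝ × ℝ => c p.1 p.2) := by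
    apply Continuous.add
    apply Continuous.add
    · exact continuous_const
    · exact continuous_const.mul (Complex.continuous_ofReal.comp (hch₀'.comp continuous_snd))
    · exact (Complex.continuous_ofReal.comp continuous_fst).mul
        (continuous_const.mul (Complex.continuous_ofReal.comp (hcd'.comp continuous_snd)))
  -- membership restated
  have hmem₀ : ∀ s ∈ Set.Icc (0:ℝ) 1, ∀ x ∈ Set.Icc a b, γ s x ∈ V := by
    intro s hs x hx
    have e : (x : ℂ) + Complex.I * Complex.ofReal (h₀ x + s * (h₁ x - h₀ x)) = γ s x := by
      simp only [hγ_def, hd_def]; push_cast; ring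
    rw [← e]; exact hmem s hs x hx
  -- enlarge the parameter interval
  set Kc : Set ℂ := (fun p : ℝ × ℝ => γ p.1 p.2) '' (Set.Icc (0:ℝ) 1 ×ˢ Set.Icc a b) with hKc_def
  have hKcomp : IsCompact Kc := ((isCompact_Icc).prod isCompact_Icc).image hγcont
  have hKV : Kc ⊆ V := by
    rintro w ⟨⟨s, x⟩, ⟨hs, hx⟩, rfl⟩
    exact hmem₀ s hs x hx
  obtain ⟨δ, hδpos, hδ⟩ := hKcomp.exists_thickening_subset_open hV hKV
  obtain ⟨M, hM⟩ := (isCompact_Icc (a := a) (b := b)).exists_bound_of_continuousOn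
    hcd.continuousOn (f := d)
  set M' : ℝ := max M 0 with hM'_def
  have hM'0 : 0 ≤ M' := le_max_right _ _
  set ε : ℝ := δ / (M' + 1) with hε_def
  have hεpos : 0 < ε := div_pos hδpos (by linarith)
  have hεM : ε * M' < δ := by
    have h1 : ε * M' < ε * (M' + 1) := by nlinarith
    have h2 : ε * (M' + 1) = δ := by
      rw [hε_def]; exact div_mul_cancel₀ _ (ne_of_gt (by linarith))
    linarith
  have hmem' : ∀ s ∈ Set.Icc (-ε) (1+ε), ∀ x ∈ Set.Icc a b, γ s x ∈ V := by
    intro s hs x hx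
    set t : ℝ := max 0 (min 1 s) with ht_def
    have ht : t ∈ Set.Icc (0:ℝ) 1 :=
      ⟨le_max_left _ _, max_le zero_le_one (min_le_left _ _)⟩
    have hst : |s - t| ≤ ε := by
      rcases le_total s 0 with h | h
      · have h0 : t = 0 := max_eq_left ((min_le_right 1 s).trans h)
        rw [h0, sub_zero, _root_.abs_of_nonpos h]
        linarith [hs.1]
      · rcases le_total s 1 with h2 | h2
        · have h0 : t = s := by rw [ht_def, min_eq_right h2, max_eq_right h]
          rw [h0, sub_self, abs_zero]; exact le_of_lt hεpos
        · have h0 : t = 1 := by rw [ht_def, min_eq_left h2, max_eq_right zero_le_one]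
          rw [h0, _root_.abs_of_nonneg (by linarith)]
          linarith [hs.2]
    apply hδ
    rw [Metric.mem_thickening_iff]
    refine ⟨γ t x, ⟨⟨t, x⟩, ⟨ht, hx⟩, rfl⟩, ?_⟩
    have hdist : dist (γ s x) (γ t x) = |s - t| * |d x| := by
      rw [Complex.dist_eq]
      have : γ s x - γ t x = ((s - t : ℝ) : ℂ) * (Complex.I * (d x : ℂ)) := by
        simp only [hγ_def]; push_cast; ring
      rw [this, norm_mul, norm_mul, Complex.norm_I, one_mul, Complex.norm_real, Complex.norm_real,
        Real.norm_eq_abs, Real.norm_eq_abs]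
    rw [hdist]
    calc |s - t| * |d x| ≤ ε * M' := by
          apply mul_le_mul hst _ (abs_nonneg _) (le_of_lt hεpos)
          exact le_trans (hM x hx) (le_max_left _ _)
      _ < δ := hεM
  -- continuity of F and its derivative
  have hFo : DifferentiableOn ℂ F V := fun w hw => (hF w hw).differentiableWithinAt
  have hFa : AnalyticOnNhd ℂ F V := hFo.analyticOnNhd hV
  have hFc : ContinuousOn F V := hFo.continuousOn
  have hF'c : ContinuousOn (deriv F) V := hFa.deriv.continuousOn
  set ψ : ℝ → ℝ → E := fun s x => c s x • F (γ s x) with hψ_def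
  set G : ℝ → ℝ → E := fun s x =>
    c s x • ((Complex.I * Complex.ofReal (d x)) • deriv F (γ s x))
      + (Complex.I * Complex.ofReal (d' x)) • F (γ s x) with hG_def
  have hIcc : Set.uIcc a b = Set.Icc a b := uIcc_of_le hab
  have hψcont : ∀ s ∈ Set.Icc (-ε) (1+ε), ContinuousOn (ψ s) (Set.Icc a b) := by
    intro s hs
    apply ContinuousOn.smul
    · exact (hccont.comp (continuous_const.prodMk continuous_id)).continuousOn
    · exact hFc.comp ((hγcont.comp (continuous_const.prodMk continuous_id)).continuousOn)
        (fun x hx => hmem' s hs x hx)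
  have hGcont : ∀ s ∈ Set.Icc (-ε) (1+ε), ContinuousOn (G s) (Set.Icc a b) := by
    intro s hs
    apply ContinuousOn.add
    · apply ContinuousOn.smul
      · exact (hccont.comp (continuous_const.prodMk continuous_id)).continuousOn
      · apply ContinuousOn.smul
        · exact (continuous_const.mul (Complex.continuous_ofReal.comp hcd)).continuousOn
        · exact hF'c.comp ((hγcont.comp (continuous_const.prodMk continuous_id)).continuousOn)
            (fun x hx => hmem' s hs x hx)
    · apply ContinuousOn.smul
      · exact (continuous_const.mul (Complex.continuous_ofReal.comp hcd')).continuousOn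
      · exact hFc.comp ((hγcont.comp (continuous_const.prodMk continuous_id)).continuousOn)
          (fun x hx => hmem' s hs x hx)
  have hds : ∀ x ∈ Set.Icc a b, ∀ s ∈ Set.Icc (-ε) (1+ε),
      HasDerivAt (fun s => ψ s x) (G s x) s := by
    intro x hx s hs
    have h1 : HasDerivAt (fun s : ℝ => (s : ℂ)) 1 s := (hasDerivAt_id s).ofReal_comp
    have hγs : HasDerivAt (fun s : ℝ => γ s x) (Complex.I * Complex.ofReal (d x)) s := by
      simpa [hγ_def] using ((h1.mul_const (Complex.I * Complex.ofReal (d x))).const_add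
        ((x : ℂ) + Complex.I * Complex.ofReal (h₀ x)))
    have hcs : HasDerivAt (fun s : ℝ => c s x) (Complex.I * Complex.ofReal (d' x)) s := by
      simpa [hc_def] using ((h1.mul_const (Complex.I * Complex.ofReal (d' x))).const_add
        (1 + Complex.I * Complex.ofReal (deriv h₀ x)))
    have hFd : HasDerivAt F (deriv F (γ s x)) (γ s x) := (hF _ (hmem' s hs x hx)).hasDerivAt
    have hcomp : HasDerivAt (F ∘ fun s : ℝ => γ s x)
        ((Complex.I * Complex.ofReal (d x)) • deriv F (γ s x)) s :=
      HasDerivAt.scomp (x := s) (h := fun s : ℝ => γ s x) hFd hγs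
    rw [Function.comp_def] at hcomp
    exact hcs.smul hcomp
  have hdx : ∀ s ∈ Set.Icc (-ε) (1+ε), ∀ x ∈ Set.Icc a b,
      HasDerivAt (fun x => (Complex.I * Complex.ofReal (d x)) • F (γ s x)) (G s x) x := by
    intro s hs x hx
    have hγx : HasDerivAt (fun x : ℝ => γ s x) (c s x) x := by
      have h1 : HasDerivAt (fun x : ℝ => (x : ℂ)) 1 x := (hasDerivAt_id x).ofReal_comp
      have h2 : HasDerivAt (fun x : ℝ => Complex.I * Complex.ofReal (h₀ x))
          (Complex.I * Complex.ofReal (deriv h₀ x)) x :=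
        ((hdh₀ x).hasDerivAt.ofReal_comp).const_mul Complex.I
      have h3 : HasDerivAt (fun x : ℝ => (s:ℂ) * (Complex.I * Complex.ofReal (d x)))
          ((s:ℂ) * (Complex.I * Complex.ofReal (d' x))) x :=
        (((hd x).ofReal_comp).const_mul Complex.I).const_mul (s:ℂ)
      simpa [hc_def] using (h1.fun_add h2).fun_add h3
    have hFd : HasDerivAt F (deriv F (γ s x)) (γ s x) := (hF _ (hmem' s hs x hx)).hasDerivAt
    have hcomp : HasDerivAt (F ∘ fun x : ℝ => γ s x) ((c s x) • deriv F (γ s x)) x :=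
      HasDerivAt.scomp (x := x) (h := fun x : ℝ => γ s x) hFd hγx
    rw [Function.comp_def] at hcomp
    have hIdx : HasDerivAt (fun x : ℝ => Complex.I * Complex.ofReal (d x))
        (Complex.I * Complex.ofReal (d' x)) x := ((hd x).ofReal_comp).const_mul Complex.I
    have hsm := hIdx.smul hcomp
    have e : (Complex.I * Complex.ofReal (d x)) • ((c s x) • deriv F (γ s x))
        + (Complex.I * Complex.ofReal (d' x)) • F (γ s x) = G s x := by
      rw [hG_def, smul_comm]
    rw [← e]; exact hsm
  set Φ : ℝ → E := fun s => ∫ x in a..b, ψ s x with hΦ_def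
  have hsub : ∀ s₀ ∈ Set.Icc (0:ℝ) 1, Metric.ball s₀ ε ⊆ Set.Icc (-ε) (1+ε) := by
    intro s₀ hs₀ s hs
    rw [Metric.mem_ball, Real.dist_eq] at hs
    have h2 := abs_lt.mp hs
    exact ⟨by linarith [hs₀.1], by linarith [hs₀.2]⟩
  have hbigG : ContinuousOn (fun p : ℝ × ℝ => G p.1 p.2)
      (Set.Icc (-ε) (1+ε) ×ˢ Set.Icc a b) := by
    have hmaps : ∀ p ∈ Set.Icc (-ε) (1+ε) ×ˢ Set.Icc a b, γ p.1 p.2 ∈ V :=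
      fun p hp => hmem' p.1 hp.1 p.2 hp.2
    apply ContinuousOn.add
    · apply ContinuousOn.smul hccont.continuousOn
      apply ContinuousOn.smul
      · exact (continuous_const.mul
          (Complex.continuous_ofReal.comp (hcd.comp continuous_snd))).continuousOn
      · exact hF'c.comp hγcont.continuousOn hmaps
    · apply ContinuousOn.smul
      · exact (continuous_const.mul
          (Complex.continuous_ofReal.comp (hcd'.comp continuous_snd))).continuousOn
      · exact hFc.comp hγcont.continuousOn hmaps
  obtain ⟨C, hC⟩ := ((isCompact_Icc (a := -ε) (b := 1+ε)).prod
    (isCompact_Icc (a := a) (b := b))).exists_bound_of_continuousOn hbigG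
  have key : ∀ s₀ ∈ Set.Icc (0:ℝ) 1, HasDerivAt Φ 0 s₀ := by
    intro s₀ hs₀
    have hs₀' : s₀ ∈ Set.Icc (-ε) (1+ε) := ⟨by linarith [hs₀.1, hεpos], by linarith [hs₀.2, hεpos]⟩
    have hIoc : Set.uIoc a b ⊆ Set.Icc a b := by
      rw [Set.uIoc_of_le hab]; exact Set.Ioc_subset_Icc_self
    have hmeas : ∀ᶠ s in nhds s₀, AEStronglyMeasurable (ψ s) (volume.restrict (Set.uIoc a b)) := by
      filter_upwards [Metric.ball_mem_nhds s₀ hεpos] with s hs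
      exact ((hψcont s (hsub s₀ hs₀ hs)).mono hIoc).aestronglyMeasurable measurableSet_uIoc
    have hint : IntervalIntegrable (ψ s₀) volume a b := by
      apply ContinuousOn.intervalIntegrable; rw [hIcc]; exact hψcont s₀ hs₀'
    have hmeas' : AEStronglyMeasurable (G s₀) (volume.restrict (Set.uIoc a b)) :=
      ((hGcont s₀ hs₀').mono hIoc).aestronglyMeasurable measurableSet_uIoc
    have hbound : ∀ᵐ t ∂volume, t ∈ Set.uIoc a b → ∀ s ∈ Metric.ball s₀ ε, ‖G s t‖ ≤ C := by
      apply ae_of_all; intro t ht s hs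
      exact hC (s, t) ⟨hsub s₀ hs₀ hs, hIoc ht⟩
    have hdiff : ∀ᵐ t ∂volume, t ∈ Set.uIoc a b → ∀ s ∈ Metric.ball s₀ ε,
        HasDerivAt (fun s => ψ s t) (G s t) s := by
      apply ae_of_all; intro t ht s hs
      exact hds t (hIoc ht) s (hsub s₀ hs₀ hs)
    obtain ⟨hGint, hΦd⟩ := intervalIntegral.hasDerivAt_integral_of_dominated_loc_of_deriv_le
      (Metric.ball_mem_nhds s₀ hεpos) hmeas hint hmeas' hbound intervalIntegrable_const hdiff
    have hzero : (∫ x in a..b, G s₀ x) = 0 := by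
      rw [intervalIntegral.integral_eq_sub_of_hasDerivAt
        (f := fun x => (Complex.I * Complex.ofReal (d x)) • F (γ s₀ x))
        (fun x hx => hdx s₀ hs₀' x (hIcc ▸ hx)) hGint]
      have hda : d a = 0 := by simp [hd_def, hea]
      have hdb : d b = 0 := by simp [hd_def, heb]
      simp [hda, hdb]
    rw [hzero] at hΦd
    exact hΦd
  have hconst := constant_of_has_deriv_right_zero (f := Φ) (a := (0:ℝ)) (b := 1)
    (fun s hs => (key s hs).continuousAt.continuousWithinAt)
    (fun s hs => ((key s (Set.mem_Icc_of_Ico hs)).hasDerivWithinAt))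
  have h10 : Φ 1 = Φ 0 := hconst 1 (Set.right_mem_Icc.mpr zero_le_one)
  have e0 : (∫ x in a..b, (1 + Complex.I * Complex.ofReal (deriv h₀ x)) •
      F (x + Complex.I * Complex.ofReal (h₀ x))) = Φ 0 := by
    rw [hΦ_def]
    apply intervalIntegral.integral_congr
    intro x hx
    have ec : c 0 x = 1 + Complex.I * Complex.ofReal (deriv h₀ x) := by
      simp [hc_def]
    have eγ : γ 0 x = x + Complex.I * Complex.ofReal (h₀ x) := by
      simp [hγ_def]
    simp only [hψ_def, ec, eγ]
  have e1 : (∫ x in a..b, (1 + Complex.I * Complex.ofReal (deriv h₁ x)) •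
      F (x + Complex.I * Complex.ofReal (h₁ x))) = Φ 1 := by
    rw [hΦ_def]
    apply intervalIntegral.integral_congr
    intro x hx
    have ec : c 1 x = 1 + Complex.I * Complex.ofReal (deriv h₁ x) := by
      simp only [hc_def, hd'_def]; push_cast; ring
    have eγ : γ 1 x = (x : ℂ) + Complex.I * Complex.ofReal (h₁ x) := by
      simp only [hγ_def, hd_def]; push_cast; ring
    simp only [hψ_def, ec, eγ]
  rw [e0, e1, h10]


lemma graph_log_integral_nocross (a b x₀ y₀ : ℝ) (hab : a ≤ b)
    (h : ℝ → ℝ) (hh : ContDiff ℝ 1 h) (z : ℂ)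
    (hz : z = Complex.ofReal x₀ + Complex.I * Complex.ofReal y₀)
    (hnc : ∀ x ∈ Set.Icc a b, y₀ < h x) :
    (∫ x in a..b, (1 + Complex.I * Complex.ofReal (deriv h x)) *
      (z - (x:ℂ) - Complex.I * Complex.ofReal (h x))⁻¹)
      = Complex.log (Complex.I * (z - (a:ℂ) - Complex.I * Complex.ofReal (h a)))
        - Complex.log (Complex.I * (z - (b:ℂ) - Complex.I * Complex.ofReal (h b))) := by
  have hdh : Differentiable ℝ h := hh.differentiable one_ne_zero
  set v : ℝ → ℂ := fun x => Complex.I * (z - (x:ℂ) - Complex.I * Complex.ofReal (h x)) with hv_def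
  have hv_eq : ∀ x : ℝ, v x = Complex.ofReal (h x - y₀) + Complex.ofReal (x₀ - x) * Complex.I := by
    intro x
    rw [hv_def, hz]
    push_cast
    linear_combination (y₀ - h x : ℂ) * Complex.I_sq
  have hvre : ∀ x, (v x).re = h x - y₀ := by intro x; rw [hv_eq]; simp
  have hslit : ∀ x ∈ Set.Icc a b, v x ∈ Complex.slitPlane := by
    intro x hx
    rw [Complex.mem_slitPlane_iff, hvre]
    left; linarith [hnc x hx]
  have hvne : ∀ x ∈ Set.Icc a b, z - (x:ℂ) - Complex.I * Complex.ofReal (h x) ≠ 0 := by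
    intro x hx h0
    have hv0 : v x = 0 := by simp only [hv_def]; rw [h0, mul_zero]
    have h2 := hvre x
    rw [hv0] at h2
    simp only [Complex.zero_re] at h2
    linarith [hnc x hx]
  have hP : ∀ x ∈ Set.Icc a b, HasDerivAt (fun x => -Complex.log (v x))
      ((1 + Complex.I * Complex.ofReal (deriv h x)) *
        (z - (x:ℂ) - Complex.I * Complex.ofReal (h x))⁻¹) x := by
    intro x hx
    have h1 : HasDerivAt (fun x : ℝ => (x:ℂ)) 1 x := (hasDerivAt_id x).ofReal_comp
    have hw : HasDerivAt (fun x : ℝ => z - (x:ℂ) - Complex.I * Complex.ofReal (h x))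
        (-1 - Complex.I * Complex.ofReal (deriv h x)) x := by
      have := (h1.const_sub z).fun_sub (((hdh x).hasDerivAt.ofReal_comp).const_mul Complex.I)
      simpa using this
    have hv : HasDerivAt v (Complex.I * (-1 - Complex.I * Complex.ofReal (deriv h x))) x := by
      have := hw.const_mul Complex.I
      simpa [hv_def, mul_comm] using this
    have hlog : HasDerivAt Complex.log (v x)⁻¹ (v x) := Complex.hasDerivAt_log (hslit x hx)
    have hcomp : HasDerivAt (Complex.log ∘ v)
        ((Complex.I * (-1 - Complex.I * Complex.ofReal (deriv h x))) * (v x)⁻¹) x := by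
      simpa [smul_eq_mul] using HasDerivAt.scomp (x := x) (h := v) hlog hv
    rw [Function.comp_def] at hcomp
    have hthis := hcomp.neg
    have e : -(Complex.I * (-1 - Complex.I * Complex.ofReal (deriv h x)) * (v x)⁻¹)
        = (1 + Complex.I * Complex.ofReal (deriv h x)) *
          (z - (x:ℂ) - Complex.I * Complex.ofReal (h x))⁻¹ := by
      rw [hv_def]
      rw [mul_inv, Complex.inv_I]
      linear_combination (-((z - (x:ℂ) - Complex.I * Complex.ofReal (h x))⁻¹ *
        (1 + Complex.I * Complex.ofReal (deriv h x)))) * Complex.I_sq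
    rw [← e]
    exact hthis
  have hcont : ContinuousOn (fun x : ℝ => (1 + Complex.I * Complex.ofReal (deriv h x)) *
      (z - (x:ℂ) - Complex.I * Complex.ofReal (h x))⁻¹) (Set.Icc a b) := by
    apply ContinuousOn.mul
    · exact (continuous_const.add (continuous_const.mul
        (Complex.continuous_ofReal.comp (hh.continuous_deriv le_rfl)))).continuousOn
    · apply ContinuousOn.inv₀ _ hvne
      exact ((continuous_const.sub Complex.continuous_ofReal).sub
        (continuous_const.mul (Complex.continuous_ofReal.comp hh.continuous))).continuousOn
  rw [intervalIntegral.integral_eq_sub_of_hasDerivAt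
    (f := fun x => -Complex.log (v x))
    (fun x hx => hP x (by rwa [Set.uIcc_of_le hab] at hx))
    (ContinuousOn.intervalIntegrable (by rwa [Set.uIcc_of_le hab]))]
  simp only [hv_def]
  ring


noncomputable section

lemma graph_log_integral_cross (a b x₀ y₀ : ℝ) (hx₀ : x₀ ∈ Set.Ioo a b)
    (h : ℝ → ℝ) (hh : ContDiff ℝ 1 h) (z : ℂ)
    (hz : z = Complex.ofReal x₀ + Complex.I * Complex.ofReal y₀)
    (hcross : h x₀ < y₀) :
    (∫ x in a..b, (1 + Complex.I * Complex.ofReal (deriv h x)) *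
      (z - (x:ℂ) - Complex.I * Complex.ofReal (h x))⁻¹)
      = Complex.log (Complex.I * (z - (a:ℂ) - Complex.I * Complex.ofReal (h a)))
        - Complex.log (Complex.I * (z - (b:ℂ) - Complex.I * Complex.ofReal (h b)))
        - 2 * (Real.pi : ℂ) * Complex.I := by
  have hdh : Differentiable ℝ h := hh.differentiable one_ne_zero
  set f : ℝ → ℂ := fun x => (1 + Complex.I * Complex.ofReal (deriv h x)) *
      (z - (x:ℂ) - Complex.I * Complex.ofReal (h x))⁻¹ with hf_def
  set v : ℝ → ℂ := fun x => Complex.I * (z - (x:ℂ) - Complex.I * Complex.ofReal (h x)) with hv_def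
  have hv_eq : ∀ x : ℝ, v x = Complex.ofReal (h x - y₀) + Complex.ofReal (x₀ - x) * Complex.I := by
    intro x
    rw [hv_def, hz]
    push_cast
    linear_combination (y₀ - h x : ℂ) * Complex.I_sq
  have hvre : ∀ x, (v x).re = h x - y₀ := by intro x; rw [hv_eq]; simp
  have hvim : ∀ x, (v x).im = x₀ - x := by intro x; rw [hv_eq]; simp
  have hslit : ∀ x : ℝ, x ≠ x₀ → v x ∈ Complex.slitPlane := by
    intro x hx
    rw [Complex.mem_slitPlane_iff]
    right; rw [hvim]; intro h0; apply hx; linarith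
  have hvne : ∀ x : ℝ, v x ≠ 0 := by
    intro x h0
    by_cases hxx : x = x₀
    · have h2 := hvre x
      rw [h0] at h2
      simp only [Complex.zero_re] at h2
      rw [hxx] at h2
      linarith
    · have h2 := hvim x
      rw [h0] at h2
      simp only [Complex.zero_im] at h2
      apply hxx; linarith
  have hune : ∀ x : ℝ, z - (x:ℂ) - Complex.I * Complex.ofReal (h x) ≠ 0 := by
    intro x h0
    apply hvne x
    simp only [hv_def]; rw [h0, mul_zero]
  have hvcont : Continuous v := by
    apply continuous_const.mul
    exact (continuous_const.sub Complex.continuous_ofReal).sub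
      (continuous_const.mul (Complex.continuous_ofReal.comp hh.continuous))
  have hfcont : Continuous f := by
    apply Continuous.mul
    · exact continuous_const.add (continuous_const.mul
        (Complex.continuous_ofReal.comp (hh.continuous_deriv le_rfl)))
    · exact Continuous.inv₀ ((continuous_const.sub Complex.continuous_ofReal).sub
        (continuous_const.mul (Complex.continuous_ofReal.comp hh.continuous))) hune
  have hP : ∀ x : ℝ, x ≠ x₀ → HasDerivAt (fun x => -Complex.log (v x)) (f x) x := by
    intro x hx
    have h1 : HasDerivAt (fun x : ℝ => (x:ℂ)) 1 x := (hasDerivAt_id x).ofReal_comp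
    have hw : HasDerivAt (fun x : ℝ => z - (x:ℂ) - Complex.I * Complex.ofReal (h x))
        (-1 - Complex.I * Complex.ofReal (deriv h x)) x := by
      have := (h1.const_sub z).fun_sub (((hdh x).hasDerivAt.ofReal_comp).const_mul Complex.I)
      simpa using this
    have hv : HasDerivAt v (Complex.I * (-1 - Complex.I * Complex.ofReal (deriv h x))) x := by
      have := hw.const_mul Complex.I
      simpa [hv_def, mul_comm] using this
    have hlog : HasDerivAt Complex.log (v x)⁻¹ (v x) := Complex.hasDerivAt_log (hslit x hx)
    have hcomp : HasDerivAt (Complex.log ∘ v)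
        ((Complex.I * (-1 - Complex.I * Complex.ofReal (deriv h x))) * (v x)⁻¹) x := by
      simpa [smul_eq_mul] using HasDerivAt.scomp (x := x) (h := v) hlog hv
    rw [Function.comp_def] at hcomp
    have hthis := hcomp.neg
    have e : -(Complex.I * (-1 - Complex.I * Complex.ofReal (deriv h x)) * (v x)⁻¹) = f x := by
      rw [hv_def, hf_def]
      rw [mul_inv, Complex.inv_I]
      linear_combination (-((z - (x:ℂ) - Complex.I * Complex.ofReal (h x))⁻¹ *
        (1 + Complex.I * Complex.ofReal (deriv h x)))) * Complex.I_sq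
    rw [← e]
    exact hthis
  -- the value at the crossing point
  set v₀ : ℂ := Complex.ofReal (h x₀ - y₀) with hv₀_def
  have hv₀re : v₀.re < 0 := by rw [hv₀_def]; simp; linarith
  have hv₀im : v₀.im = 0 := by rw [hv₀_def]; simp
  have habs : ‖v₀‖ = y₀ - h x₀ := by
    rw [hv₀_def, Complex.norm_real, Real.norm_eq_abs, abs_of_neg (by linarith), neg_sub]
  have hvx₀ : v x₀ = v₀ := by rw [hv_eq, hv₀_def]; simp
  -- one-sided limits of the primitive at x₀
  have hup : Tendsto (fun x => -Complex.log (v x)) (nhdsWithin x₀ (Set.Iio x₀))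
      (nhds (-((Real.log (y₀ - h x₀) : ℂ) + Real.pi * Complex.I))) := by
    have hl := Complex.tendsto_log_nhdsWithin_im_nonneg_of_re_neg_of_im_zero hv₀re hv₀im
    rw [habs] at hl
    have htv : Tendsto v (nhdsWithin x₀ (Set.Iio x₀)) (nhdsWithin v₀ {w : ℂ | 0 ≤ w.im}) := by
      rw [tendsto_nhdsWithin_iff]
      constructor
      · rw [← hvx₀]; exact (hvcont.tendsto x₀).mono_left nhdsWithin_le_nhds
      · filter_upwards [self_mem_nhdsWithin] with x hx
        have h3 : x < x₀ := hx
        show (0:ℝ) ≤ (v x).im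
        rw [hvim x]; linarith
    exact (hl.comp htv).neg
  have hdown : Tendsto (fun x => -Complex.log (v x)) (nhdsWithin x₀ (Set.Ioi x₀))
      (nhds (-((Real.log (y₀ - h x₀) : ℂ) - Real.pi * Complex.I))) := by
    have hl := Complex.tendsto_log_nhdsWithin_im_neg_of_re_neg_of_im_zero hv₀re hv₀im
    rw [habs] at hl
    have htv : Tendsto v (nhdsWithin x₀ (Set.Ioi x₀)) (nhdsWithin v₀ {w : ℂ | w.im < 0}) := by
      rw [tendsto_nhdsWithin_iff]
      constructor
      · rw [← hvx₀]; exact (hvcont.tendsto x₀).mono_left nhdsWithin_le_nhds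
      · filter_upwards [self_mem_nhdsWithin] with x hx
        have h3 : x₀ < x := hx
        show (v x).im < 0
        rw [hvim x]; linarith
    exact (hl.comp htv).neg
  -- continuity of the primitive away from x₀
  have hPcont : ∀ x : ℝ, x ≠ x₀ → ContinuousAt (fun x => -Complex.log (v x)) x := by
    intro x hx
    exact ((continuousAt_clog (hslit x hx)).comp hvcont.continuousAt).neg
  have hta : Tendsto (fun x => -Complex.log (v x)) (nhdsWithin a (Set.Ioi a))
      (nhds (-Complex.log (v a))) :=
    ((hPcont a (ne_of_lt hx₀.1)).tendsto).mono_left nhdsWithin_le_nhds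
  have htb : Tendsto (fun x => -Complex.log (v x)) (nhdsWithin b (Set.Iio b))
      (nhds (-Complex.log (v b))) :=
    ((hPcont b (ne_of_gt hx₀.2)).tendsto).mono_left nhdsWithin_le_nhds
  have hint1 : IntervalIntegrable f volume a x₀ := hfcont.intervalIntegrable _ _
  have hint2 : IntervalIntegrable f volume x₀ b := hfcont.intervalIntegrable _ _
  have h1 : (∫ x in a..x₀, f x)
      = -((Real.log (y₀ - h x₀) : ℂ) + Real.pi * Complex.I) - (-Complex.log (v a)) :=
    intervalIntegral.integral_eq_sub_of_hasDerivAt_of_tendsto hx₀.1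
      (fun x hx => hP x (ne_of_lt hx.2)) hint1 hta hup
  have h2 : (∫ x in x₀..b, f x)
      = -Complex.log (v b) - (-((Real.log (y₀ - h x₀) : ℂ) - Real.pi * Complex.I)) :=
    intervalIntegral.integral_eq_sub_of_hasDerivAt_of_tendsto hx₀.2
      (fun x hx => hP x (ne_of_gt hx.1)) hint2 hdown htb
  have hsplit := intervalIntegral.integral_add_adjacent_intervals hint1 hint2
  rw [← hsplit, h1, h2]
  simp only [hv_def]
  ring


lemma statement15_main {H : Type*} [NormedAddCommGroup H] [InnerProductSpace ℂ H]
    [CompleteSpace H] (a b : ℝ) (hab : a < b)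
    (g : ℝ → ℝ) (hg : ContDiff ℝ 1 g) (hga : g a = 0) (hgb : g b = 0)
    (hgneg : ∀ x ∈ Set.Icc a b, g x ≤ 0)
    (K : ℂ → H →L[ℂ] H) (U : Set ℂ) (hU : IsOpen U)
    (hDU : {z : ℂ | z.re ∈ Set.Icc a b ∧ z.im ∈ Set.Icc (g z.re) 0} ⊆ U)
    (hKd : ∀ w ∈ U, DifferentiableAt ℂ K w)
    (x₀ y₀ : ℝ) (hx₀ : x₀ ∈ Set.Ioo a b) (hy₀ : y₀ ∈ Set.Ioo (g x₀) 0)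
    (z : ℂ) (hz : z = Complex.ofReal x₀ + Complex.I * Complex.ofReal y₀) :
    (∫ x in a..b, ((1 + Complex.I * Complex.ofReal (deriv g x)) *
        (z - (x : ℂ) - Complex.I * Complex.ofReal (g x))⁻¹) •
        K ((x : ℂ) + Complex.I * Complex.ofReal (g x)))
      = (∫ x in a..b, ((z - (x : ℂ))⁻¹) • K (x : ℂ))
          - (2 * (Real.pi : ℂ) * Complex.I) • K z := by
  have hreim : ∀ (x r : ℝ), ((x:ℂ) + Complex.I * (r:ℂ)).re = x
      ∧ ((x:ℂ) + Complex.I * (r:ℂ)).im = r := by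
    intro x r; constructor <;> simp
  have hzU : z ∈ U := by
    apply hDU
    rw [hz]
    refine ⟨?_, ?_⟩
    · rw [(hreim x₀ y₀).1]; exact ⟨hx₀.1.le, hx₀.2.le⟩
    · rw [(hreim x₀ y₀).2, (hreim x₀ y₀).1]; exact ⟨hy₀.1.le, hy₀.2.le⟩
  -- the regularized function
  set F₁ : ℂ → H →L[ℂ] H :=
    fun w => if w = z then -deriv K z else (z - w)⁻¹ • (K w - K z) with hF₁_def
  have haux : ∀ w : ℂ, w ≠ z → F₁ w = (z - w)⁻¹ • (K w - K z) := by
    intro w hw; simp [hF₁_def, if_neg hw]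
  have hF₁off : ∀ w ∈ U, w ≠ z → DifferentiableAt ℂ F₁ w := by
    intro w hw hwz
    have hbase : DifferentiableAt ℂ (fun u => (z - u)⁻¹ • (K u - K z)) w := by
      apply DifferentiableAt.fun_smul
      · exact ((differentiableAt_const z).sub differentiableAt_id).inv
          (sub_ne_zero.mpr (Ne.symm hwz))
      · exact (hKd w hw).sub_const (K z)
    apply hbase.congr_of_eventuallyEq
    filter_upwards [isOpen_ne.mem_nhds hwz] with u hu
    exact haux u hu
  have hcontz : ContinuousAt F₁ z := by
    rw [← continuousWithinAt_compl_self]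
    have hslope : Tendsto (slope K z) (nhdsWithin z {z}ᶜ) (nhds (deriv K z)) :=
      hasDerivAt_iff_tendsto_slope.mp (hKd z hzU).hasDerivAt
    have hneg : Tendsto (fun w => -slope K z w) (nhdsWithin z {z}ᶜ) (nhds (-deriv K z)) :=
      hslope.neg
    have hF₁z : F₁ z = -deriv K z := by simp [hF₁_def]
    unfold ContinuousWithinAt
    rw [hF₁z]
    apply hneg.congr'
    filter_upwards [self_mem_nhdsWithin] with w hw
    rw [haux w hw, slope_def_module]
    rw [show z - w = -(w - z) by ring, inv_neg, neg_smul]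
  have hF₁diff : ∀ w ∈ U, DifferentiableAt ℂ F₁ w := by
    intro w hw
    by_cases hwz : w = z
    · subst hwz
      apply AnalyticAt.differentiableAt
      apply Complex.analyticAt_of_differentiable_on_punctured_nhds_of_continuousAt _ hcontz
      filter_upwards [mem_nhdsWithin_of_mem_nhds (hU.mem_nhds hw), self_mem_nhdsWithin]
        with u hu hune
      exact hF₁off u hu hune
    · exact hF₁off w hw hwz
  have hF₁cont : ContinuousOn F₁ U := fun w hw => (hF₁diff w hw).continuousAt.continuousWithinAt
  -- curve membership
  have hcurve : ∀ x ∈ Set.Icc a b, (x:ℂ) + Complex.I * Complex.ofReal (g x) ∈ U := by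
    intro x hx
    apply hDU
    refine ⟨?_, ?_⟩
    · rw [(hreim x (g x)).1]; exact hx
    · rw [(hreim x (g x)).2, (hreim x (g x)).1]
      exact ⟨le_refl _, hgneg x hx⟩
  have hline : ∀ x ∈ Set.Icc a b, (x:ℂ) ∈ U := by
    intro x hx
    apply hDU
    constructor
    · simpa using hx
    · simp only [Complex.ofReal_im, Complex.ofReal_re]
      exact ⟨hgneg x hx, le_refl 0⟩
  -- nonvanishing facts
  have hune : ∀ x : ℝ, z - (x:ℂ) - Complex.I * Complex.ofReal (g x) ≠ 0 := by
    intro x h0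
    have h1 : z = (x:ℂ) + Complex.I * Complex.ofReal (g x) := by linear_combination h0
    rw [hz] at h1
    have hre := congrArg Complex.re h1
    have him := congrArg Complex.im h1
    rw [(hreim x₀ y₀).1, (hreim x (g x)).1] at hre
    rw [(hreim x₀ y₀).2, (hreim x (g x)).2] at him
    rw [← hre] at him
    exact absurd him.symm (ne_of_lt hy₀.1)
  have hlne : ∀ x : ℝ, z - (x:ℂ) ≠ 0 := by
    intro x h0
    have h1 : z = (x:ℂ) := by linear_combination h0
    have him := congrArg Complex.im h1
    rw [hz, (hreim x₀ y₀).2] at him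
    simp only [Complex.ofReal_im] at him
    exact absurd him (ne_of_lt hy₀.2)
  have hwne : ∀ x : ℝ, (x:ℂ) + Complex.I * Complex.ofReal (g x) ≠ z := by
    intro x h0
    exact hune x (by linear_combination -h0)
  have hxne : ∀ x : ℝ, (x:ℂ) ≠ z := by
    intro x h0
    exact hlne x (by linear_combination -h0)
  -- continuity of coefficient functions
  have hc1 : Continuous fun x : ℝ => 1 + Complex.I * Complex.ofReal (deriv g x) :=
    continuous_const.add (continuous_const.mul
      (Complex.continuous_ofReal.comp (hg.continuous_deriv le_rfl)))
  have hc2 : Continuous fun x : ℝ => ((1 + Complex.I * Complex.ofReal (deriv g x)) *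
      (z - (x:ℂ) - Complex.I * Complex.ofReal (g x))⁻¹) :=
    hc1.mul (Continuous.inv₀ ((continuous_const.sub Complex.continuous_ofReal).sub
      (continuous_const.mul (Complex.continuous_ofReal.comp hg.continuous))) hune)
  have hγc : Continuous fun x : ℝ => (x:ℂ) + Complex.I * Complex.ofReal (g x) :=
    Complex.continuous_ofReal.add (continuous_const.mul
      (Complex.continuous_ofReal.comp hg.continuous))
  have hIcc : Set.uIcc a b = Set.Icc a b := Set.uIcc_of_le hab.le
  have i1 : IntervalIntegrable (fun x => (1 + Complex.I * Complex.ofReal (deriv g x)) •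
      F₁ ((x:ℂ) + Complex.I * Complex.ofReal (g x))) volume a b := by
    apply ContinuousOn.intervalIntegrable
    rw [hIcc]
    exact (hc1.continuousOn).smul (hF₁cont.comp hγc.continuousOn hcurve)
  have i2 : IntervalIntegrable (fun x => ((1 + Complex.I * Complex.ofReal (deriv g x)) *
      (z - (x:ℂ) - Complex.I * Complex.ofReal (g x))⁻¹) • K z) volume a b :=
    (hc2.smul continuous_const).intervalIntegrable _ _
  have i3 : IntervalIntegrable (fun x : ℝ => F₁ (x:ℂ)) volume a b := by
    apply ContinuousOn.intervalIntegrable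
    rw [hIcc]
    exact hF₁cont.comp Complex.continuous_ofReal.continuousOn hline
  have hc4 : Continuous fun x : ℝ => (z - (x:ℂ))⁻¹ :=
    Continuous.inv₀ (continuous_const.sub Complex.continuous_ofReal) hlne
  have i4 : IntervalIntegrable (fun x : ℝ => (z - (x:ℂ))⁻¹ • K z) volume a b :=
    (hc4.smul continuous_const).intervalIntegrable _ _
  -- split the left-hand side
  have split1 : (∫ x in a..b, ((1 + Complex.I * Complex.ofReal (deriv g x)) *
        (z - (x : ℂ) - Complex.I * Complex.ofReal (g x))⁻¹) •
        K ((x : ℂ) + Complex.I * Complex.ofReal (g x)))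
      = (∫ x in a..b, (1 + Complex.I * Complex.ofReal (deriv g x)) •
          F₁ ((x:ℂ) + Complex.I * Complex.ofReal (g x)))
        + (∫ x in a..b, ((1 + Complex.I * Complex.ofReal (deriv g x)) *
            (z - (x:ℂ) - Complex.I * Complex.ofReal (g x))⁻¹)) • K z := by
    rw [← intervalIntegral.integral_smul_const]
    rw [← intervalIntegral.integral_add i1 i2]
    apply intervalIntegral.integral_congr
    intro x hx
    dsimp only
    rw [haux _ (hwne x)]
    simp only [smul_smul, smul_sub]
    module
  have split2 : (∫ x in a..b, ((z - (x : ℂ))⁻¹) • K (x : ℂ))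
      = (∫ x in a..b, F₁ (x:ℂ)) + (∫ x in a..b, (z - (x:ℂ))⁻¹) • K z := by
    rw [← intervalIntegral.integral_smul_const]
    rw [← intervalIntegral.integral_add i3 i4]
    apply intervalIntegral.integral_congr
    intro x hx
    dsimp only
    rw [haux _ (hxne x)]
    simp only [smul_sub]
    module
  -- homotopy step
  have hmemH : ∀ s ∈ Set.Icc (0:ℝ) 1, ∀ x ∈ Set.Icc a b,
      (x : ℂ) + Complex.I * Complex.ofReal (g x + s * ((0:ℝ) - g x)) ∈ U := by
    intro s hs x hx
    apply hDU
    refine ⟨?_, ?_⟩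
    · rw [(hreim x (g x + s * (0 - g x))).1]; exact hx
    · rw [(hreim x (g x + s * (0 - g x))).2, (hreim x (g x + s * (0 - g x))).1]
      constructor
      · nlinarith [hgneg x hx, hs.1, hs.2]
      · nlinarith [hgneg x hx, hs.1, hs.2]
  have hhom := homotopy_invariance F₁ U hU hF₁diff a b hab.le g (fun _ => 0) hg contDiff_const
    hga hgb hmemH
  have hJ0 : (∫ x in a..b, (1 + Complex.I * Complex.ofReal (deriv (fun _ : ℝ => (0:ℝ)) x)) •
      F₁ ((x:ℂ) + Complex.I * Complex.ofReal ((fun _ : ℝ => (0:ℝ)) x)))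
      = ∫ x in a..b, F₁ (x:ℂ) := by
    apply intervalIntegral.integral_congr
    intro x hx
    dsimp only
    simp
  rw [hJ0] at hhom
  -- scalar computation
  have hSg := graph_log_integral_cross a b x₀ y₀ hx₀ g hg z hz hy₀.1
  have hS0 := graph_log_integral_nocross a b x₀ y₀ hab.le (fun _ => (0:ℝ)) contDiff_const z hz
    (fun x hx => hy₀.2)
  have e5 : (∫ x in a..b, (1 + Complex.I * Complex.ofReal (deriv (fun _ : ℝ => (0:ℝ)) x)) *
      (z - (x:ℂ) - Complex.I * Complex.ofReal ((fun _ : ℝ => (0:ℝ)) x))⁻¹)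
      = ∫ x in a..b, (z - (x:ℂ))⁻¹ := by
    apply intervalIntegral.integral_congr
    intro x hx
    dsimp only
    simp
  rw [e5] at hS0
  simp only [Complex.ofReal_zero, mul_zero, sub_zero] at hS0
  rw [hga, hgb] at hSg
  simp only [Complex.ofReal_zero, mul_zero, sub_zero] at hSg
  have hscal : (∫ x in a..b, ((1 + Complex.I * Complex.ofReal (deriv g x)) *
      (z - (x:ℂ) - Complex.I * Complex.ofReal (g x))⁻¹))
      = (∫ x in a..b, (z - (x:ℂ))⁻¹) - 2 * (Real.pi : ℂ) * Complex.I := by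
    rw [hSg, hS0]
  rw [split1, split2, hhom, hscal, sub_smul]
  abel

/-- for `z` in the interior of the region between `[a,b]` and the
deformed contour, the continued integral differs from the original one by the residue
term `−2πi K(z)`. -/
theorem statement15 (a b : ℝ) (hab : a < b)
    (g : ℝ → ℝ) (hg : ContDiff ℝ 1 g) (hga : g a = 0) (hgb : g b = 0)
    (hgneg : ∀ x ∈ Set.Icc a b, g x ≤ 0)
    (K : ℂ → H →L[ℂ] H) (U : Set ℂ) (hU : IsOpen U)
    (hDU : {z : ℂ | z.re ∈ Set.Icc a b ∧ z.im ∈ Set.Icc (g z.re) 0} ⊆ U)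
    (hKc : ContinuousOn K {z : ℂ | z.re ∈ Set.Icc a b ∧ z.im ∈ Set.Icc (g z.re) 0})
    (hKd : ∀ w ∈ U, DifferentiableAt ℂ K w)
    (x₀ y₀ : ℝ) (hx₀ : x₀ ∈ Set.Ioo a b) (hy₀ : y₀ ∈ Set.Ioo (g x₀) 0)
    (z : ℂ) (hz : z = Complex.ofReal x₀ + Complex.I * Complex.ofReal y₀) :
    (∫ x in a..b, ((1 + Complex.I * Complex.ofReal (deriv g x)) *
        (z - (x : ℂ) - Complex.I * Complex.ofReal (g x))⁻¹) •
        K ((x : ℂ) + Complex.I * Complex.ofReal (g x)))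
      = (∫ x in a..b, ((z - (x : ℂ))⁻¹) • K (x : ℂ))
          - (2 * (Real.pi : ℂ) * Complex.I) • K z := by
  exact statement15_main a b hab g hg hga hgb hgneg K U hU hDU hKd x₀ y₀ hx₀ hy₀ z hz

end
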